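/- arXiv:1403.1900 — 2 statements merged into one kernel-verified Lean document; each statement's English description precedes it below -/
import Mathlib

section
/- Let V be a real inner product space of even dimension with a unitary almost complex structure J, and let A = a₀A₀ + a₁J∘(A₀ − J∘A_J) + (c₁ − a₀)J∘A_J. Then for any unit vector X: J_X^A(X) = 0, J_X^A(JX) = c₁·JX, and J_X^A(Y) = a₀Y + a₁JY for all Y orthogonal to both X and JX. -/
open RealInnerProductSpace

/-- For `A = a₀A₀ + a₁J(A₀ - JA_J) + (c₁ - a₀)JA_J` on an even-dimensional real inner
product space with unitary almost complex structure `J` and unit vector `X`: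
`J_X^A(X) = 0`, `J_X^A(JX) = c₁·JX`, and `J_X^A(Y) = a₀Y + a₁JY` for `Y ⟂ X, JX`. -/
theorem stmt12 {V : Type*} [NormedAddCommGroup V] [InnerProductSpace ℝ V]
    [FiniteDimensional ℝ V] (hdim : Even (Module.finrank ℝ V))
    (J : V →ₗ[ℝ] V)
    (hJ2 : ∀ x : V, J (J x) = -x)
    (hJi : ∀ x y : V, ⟪J x, J y⟫ = ⟪x, y⟫)
    (a₀ a₁ c₁ : ℝ)
    (A : V → V → V → V)
    (hA : ∀ X Y Z : V, A X Y Z =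
      a₀ • (⟪Y, Z⟫ • X - ⟪X, Z⟫ • Y)
      + a₁ • J ((⟪Y, Z⟫ • X - ⟪X, Z⟫ • Y)
          - J ((1/3 : ℝ) • (⟪J Y, Z⟫ • X - ⟪J X, Z⟫ • Y - (2 : ℝ) • ⟪J X, Y⟫ • Z)))
      + (c₁ - a₀) • J ((1/3 : ℝ) • (⟪J Y, Z⟫ • X - ⟪J X, Z⟫ • Y - (2 : ℝ) • ⟪J X, Y⟫ • Z)))
    (X : V) (hX : ‖X‖ = 1) :
    A X X X = 0 ∧
    A (J X) X X = c₁ • J X ∧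
    ∀ Y : V, ⟪X, Y⟫ = 0 → ⟪J X, Y⟫ = 0 → A Y X X = a₀ • Y + a₁ • J Y := by

  have hXX : ⟪X, X⟫ = (1:ℝ) := by
    rw [real_inner_self_eq_norm_sq, hX]; norm_num
  have hJXX : ⟪J X, X⟫ = 0 := by
    have h := hJi (J X) X
    rw [hJ2] at h
    have h2 : ⟪-X, J X⟫ = ⟪J X, X⟫ := h
    rw [inner_neg_left, real_inner_comm] at h2
    linarith
  have hXJX : ⟪X, J X⟫ = 0 := by rw [real_inner_comm]; exact hJXX
  have hJJX : ⟪J (J X), X⟫ = -1 := by rw [hJ2, inner_neg_left, hXX]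
  refine ⟨?_, ?_, ?_⟩
  · rw [hA]
    simp [hXX, hJXX, hXJX]
  · rw [hA]
    simp only [hXX, hJXX, hXJX, hJJX, map_smul, map_sub, map_add, map_neg, hJ2,
      inner_smul_left, inner_neg_left]
    match_scalars <;> (try simp only [hJXX, hXX]) <;> (try ring)
  · intro Y hXY hJXY
    have hYX : ⟪Y, X⟫ = 0 := by rw [real_inner_comm]; exact hXY
    have hJYX : ⟪J Y, X⟫ = 0 := by
      have h := hJi (J Y) X
      rw [hJ2, inner_neg_left] at h
      rw [real_inner_comm] at hJXY
      have : ⟪J Y, X⟫ = -⟪Y, J X⟫ := by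
        rw [← h]
      rw [this, hJXY, neg_zero]
    rw [hA]
    simp only [hXX, hYX, hJYX, hJXY, map_smul, map_sub, map_add, map_neg, hJ2,
      inner_smul_left]
    match_scalars <;> (try simp only [hJXX, hXX]) <;> (try ring)
end

section
/- Let ∇ be the torsion-free connection on ℝ² whose only nonzero Christoffel symbols in the standard coordinates are Γ₂₂² = 2, Γ₁₂¹ = Γ₂₁¹ = Γ₁₁² = 1. Then the curvature R(∂₁,∂₂)∂₂ = ∂₁ and R(∂₂,∂₁)∂₁ = ∂₂, i.e. for every nonzero tangent vector the Jacobi operator has eigenvalues {0, λ(X)} with λ(X) > 0; in particular the symmetric Ricci tensor is positive definite. -/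
/-- The (constant) Christoffel symbols `Γ_{ij}{}^k` of Example 1.6 with `m = 2`, `ε = 0`:
`Γ₂₂² = 2`, `Γ₁₂¹ = Γ₂₁¹ = Γ₁₁² = 1`, all others zero (indices `0,1` for `1,2`). -/
noncomputable def Γex : Fin 2 → Fin 2 → Fin 2 → ℝ := fun i j k =>
  if i = 1 ∧ j = 1 ∧ k = 1 then 2
  else if (i = 0 ∧ j = 1 ∧ k = 0) ∨ (i = 1 ∧ j = 0 ∧ k = 0) ∨ (i = 0 ∧ j = 0 ∧ k = 1) then 1
  else 0

/-- The curvature `R_{ijk}{}^l = ∂ᵢΓ_{jk}{}^l - ∂ⱼΓ_{ik}{}^l + Γ_{in}{}^lΓ_{jk}{}^n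
- Γ_{jn}{}^lΓ_{ik}{}^n` at the point `p` (the Christoffel symbols are constant). -/
noncomputable def Rex (p : EuclideanSpace ℝ (Fin 2)) (i j k l : Fin 2) : ℝ :=
  fderiv ℝ (fun _ : EuclideanSpace ℝ (Fin 2) => Γex j k l) p (EuclideanSpace.single i 1)
  - fderiv ℝ (fun _ : EuclideanSpace ℝ (Fin 2) => Γex i k l) p (EuclideanSpace.single j 1)
  + ∑ n : Fin 2, (Γex i n l * Γex j k n - Γex j n l * Γex i k n)


lemma Rex_eq (p : EuclideanSpace ℝ (Fin 2)) (i j k l : Fin 2) :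
    Rex p i j k l = ∑ n : Fin 2, (Γex i n l * Γex j k n - Γex j n l * Γex i k n) := by
  simp [Rex]

lemma Rex_val (p : EuclideanSpace ℝ (Fin 2)) (i j k l : Fin 2) :
    Rex p i j k l = Γex i 0 l * Γex j k 0 - Γex j 0 l * Γex i k 0
      + (Γex i 1 l * Γex j k 1 - Γex j 1 l * Γex i k 1) := by
  rw [Rex_eq, Fin.sum_univ_two]

/-- The matrix of the Jacobi operator `J_X(Y) = R(Y,X)X`, i.e.
`(J_X)ˡᵢ = ∑_{j,k} X^j X^k R_{ijk}{}^l`. -/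
noncomputable def jacMat (p : EuclideanSpace ℝ (Fin 2)) (X : Fin 2 → ℝ) :
    Matrix (Fin 2) (Fin 2) ℝ :=
  Matrix.of fun l i => ∑ j : Fin 2, ∑ k : Fin 2, X j * X k * Rex p i j k l


lemma jacMat_eq (p : EuclideanSpace ℝ (Fin 2)) (X : Fin 2 → ℝ) :
    jacMat p X = !![X 1 ^ 2, -(X 0 * X 1); -(X 0 * X 1), X 0 ^ 2] := by
  ext l i
  fin_cases l <;> fin_cases i <;>
    simp [jacMat, Fin.sum_univ_two, Rex_val, Γex] <;> ring

lemma spec2 (a b : ℝ) (h : ¬ (a = 0 ∧ b = 0)) :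
    spectrum ℝ (Matrix.toLin' !![b ^ 2, -(a * b); -(a * b), a ^ 2]) = {0, a ^ 2 + b ^ 2} := by
  have : Matrix.toLin' !![b ^ 2, -(a * b); -(a * b), a ^ 2]
      = Matrix.toLinAlgEquiv' !![b ^ 2, -(a * b); -(a * b), a ^ 2] := rfl
  rw [this, AlgEquiv.spectrum_eq]
  ext x
  simp only [spectrum.mem_iff, Set.mem_insert_iff, Set.mem_singleton_iff]
  rw [Matrix.isUnit_iff_isUnit_det, isUnit_iff_ne_zero, not_not]
  have hdet : (algebraMap ℝ (Matrix (Fin 2) (Fin 2) ℝ) x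
      - !![b ^ 2, -(a * b); -(a * b), a ^ 2]).det = (x - 0) * (x - (a ^ 2 + b ^ 2)) := by
    rw [Algebra.algebraMap_eq_smul_one]
    rw [show (x • (1 : Matrix (Fin 2) (Fin 2) ℝ) - !![b ^ 2, -(a * b); -(a * b), a ^ 2])
        = !![x - b ^ 2, a * b; a * b, x - a ^ 2] by
      ext i j; fin_cases i <;> fin_cases j <;> simp [Matrix.smul_apply, Matrix.one_apply]]
    rw [Matrix.det_fin_two_of]
    ring
  rw [hdet, mul_eq_zero, sub_eq_zero, sub_eq_zero]

/-- For the connection on `ℝ²` with constant Christoffel symbols `Γ₂₂² = 2`,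
`Γ₁₂¹ = Γ₂₁¹ = Γ₁₁² = 1`: `R(∂₁,∂₂)∂₂ = ∂₁` and `R(∂₂,∂₁)∂₁ = ∂₂`; hence for every
nonzero tangent vector `X` the Jacobi operator has eigenvalues `{0, λ(X)}` with
`λ(X) > 0`, and in particular the symmetric Ricci tensor `ρ(X,X) = tr J_X` is
positive definite. -/
theorem stmt17 (p : EuclideanSpace ℝ (Fin 2)) :
    (∀ l : Fin 2, Rex p 0 1 1 l = if l = 0 then 1 else 0) ∧
    (∀ l : Fin 2, Rex p 1 0 0 l = if l = 1 then 1 else 0) ∧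
    (∀ X : Fin 2 → ℝ, X ≠ 0 → ∃ lam > (0 : ℝ),
      spectrum ℝ (Matrix.toLin' (jacMat p X)) = {0, lam} ∧ (jacMat p X).trace > 0) := by
  refine ⟨?_, ?_, ?_⟩
  · intro l; fin_cases l <;> simp [Rex_val, Γex] <;> norm_num
  · intro l; fin_cases l <;> simp [Rex_val, Γex] <;> norm_num
  · intro X hX
    have hne : ¬ (X 0 = 0 ∧ X 1 = 0) := by
      rintro ⟨h0, h1⟩
      apply hX
      funext i; fin_cases i <;> assumption
    have hpos : X 0 ^ 2 + X 1 ^ 2 > 0 := by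
      rcases not_and_or.mp hne with h | h
      · positivity
      · positivity
    refine ⟨X 0 ^ 2 + X 1 ^ 2, hpos, ?_, ?_⟩
    · rw [jacMat_eq]; exact spec2 _ _ hne
    · rw [jacMat_eq]
      simp [Matrix.trace, Matrix.diag, Fin.sum_univ_two]
      linarith
end
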